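/- Let Φ be an m×n complex matrix with unit-norm columns φ_1,...,φ_n achieving equality in the Welch bound μ(Φ) = sqrt((n-m)/(m(n-1))). Then ΦΦ* = (n/m)·I and |⟨φ_i, φ_j⟩| = sqrt((n-m)/(m(n-1))) for all i ≠ j. -/

import Mathlib

open Matrix
/-- If an `m × n` complex matrix `A` with unit-norm columns achieves equality in the
Welch bound, then `A Aᴴ = (n/m) I` and all off-diagonal inner products of columns
have modulus `√((n-m)/(m(n-1)))`, i.e. `A` is an equiangular tight frame. -/
theorem welch_equality (m n : ℕ) (hm : 0 < m) (hmn : m ≤ n)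
    (A : Matrix (Fin m) (Fin n) ℂ)
    (hunit : ∀ j, (Aᴴ * A) j j = 1) (μ : ℝ)
    (hμ : IsGreatest {r : ℝ | ∃ i j : Fin n, i ≠ j ∧ r = ‖(Aᴴ * A) i j‖} μ)
    (heq : μ = Real.sqrt (((n : ℝ) - m) / (m * ((n : ℝ) - 1)))) :
    A * Aᴴ = ((n : ℂ) / m) • (1 : Matrix (Fin m) (Fin m) ℂ) ∧
      ∀ i j : Fin n, i ≠ j →
        ‖(Aᴴ * A) i j‖ = Real.sqrt (((n : ℝ) - m) / (m * ((n : ℝ) - 1))) := by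
  classical
  obtain ⟨i0, j0, hij0, -⟩ := hμ.1
  have hn2 : 2 ≤ n := by
    by_contra h
    push_neg at h
    interval_cases n
    · exact i0.elim0
    · exact hij0 (Subsingleton.elim i0 j0)
  set G := Aᴴ * A with hG
  set T := A * Aᴴ with hT
  set M : ℝ := (m : ℝ) with hM
  set N : ℝ := (n : ℝ) with hN
  have hM0 : 0 < M := by rw [hM]; positivity
  have hMN : M ≤ N := by rw [hM, hN]; exact_mod_cast hmn
  have hN1 : (1 : ℝ) < N := by
    have : (2 : ℝ) ≤ N := by rw [hN]; exact_mod_cast hn2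
    linarith
  set c : ℝ := (N - M) / (M * (N - 1)) with hc
  have hc0 : 0 ≤ c := by
    rw [hc]; apply div_nonneg <;> nlinarith
  have hμsq : μ ^ 2 = c := by
    rw [heq, Real.sq_sqrt hc0]
  -- Hermitian facts
  have hGherm : Gᴴ = G := isHermitian_conjTranspose_mul_self A
  have hTherm : Tᴴ = T := isHermitian_mul_conjTranspose_self A
  have hGstar : ∀ i j, G j i = starRingEnd ℂ (G i j) := by
    intro i j
    conv_lhs => rw [← hGherm]
    rfl
  have hTstar : ∀ i j, T j i = starRingEnd ℂ (T i j) := by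
    intro i j
    conv_lhs => rw [← hTherm]
    rfl
  -- diagonal of T is real
  set t : Fin m → ℝ := fun i => ∑ k, Complex.normSq (A i k) with ht
  have hTdiag : ∀ i, T i i = (t i : ℂ) := by
    intro i
    simp only [hT, mul_apply, conjTranspose_apply, ht]
    push_cast
    exact Finset.sum_congr rfl fun k _ => (Complex.mul_conj (A i k)).symm ▸ rfl
  -- traces
  have htrG : trace G = (n : ℂ) := by
    simp only [trace, diag]
    rw [Finset.sum_congr rfl fun j (_ : j ∈ Finset.univ) => hunit j]
    simp
  have htrT : trace T = (n : ℂ) := by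
    rw [hT, trace_mul_comm, ← hG, htrG]
  have hsumt : ∑ i, t i = N := by
    have h1 : ((∑ i, t i : ℝ) : ℂ) = (n : ℂ) := by
      push_cast
      rw [← htrT]
      simp only [trace, diag]
      exact Finset.sum_congr rfl fun i _ => by rw [hTdiag i]
    rw [hN]
    exact_mod_cast h1
  -- the key trace equality
  set S : ℝ := ∑ i, ∑ j, Complex.normSq (G i j) with hS
  set S' : ℝ := ∑ i, ∑ j, Complex.normSq (T i j) with hS'
  have htrGG : ((S : ℂ)) = trace (G * G) := by
    simp only [trace, diag, mul_apply, hS]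
    push_cast
    refine Finset.sum_congr rfl fun i _ => Finset.sum_congr rfl fun j _ => ?_
    rw [hGstar i j, Complex.mul_conj]
  have htrTT : ((S' : ℂ)) = trace (T * T) := by
    simp only [trace, diag, mul_apply, hS']
    push_cast
    refine Finset.sum_congr rfl fun i _ => Finset.sum_congr rfl fun j _ => ?_
    rw [hTstar i j, Complex.mul_conj]
  have hSS' : S = S' := by
    have h1 : trace (G * G) = trace (T * T) := by
      calc trace (G * G) = trace (Aᴴ * (A * (Aᴴ * A))) := by
            rw [hG, Matrix.mul_assoc]
        _ = trace ((A * (Aᴴ * A)) * Aᴴ) := trace_mul_comm _ _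
        _ = trace (T * T) := by
            rw [hT, Matrix.mul_assoc, Matrix.mul_assoc, Matrix.mul_assoc]
    have h2 : ((S : ℂ)) = ((S' : ℂ)) := by rw [htrGG, htrTT, h1]
    exact_mod_cast h2
  -- off-diagonal set
  set s : Finset (Fin n × Fin n) := Finset.univ.filter (fun p => ¬ p.1 = p.2) with hs
  have himg : Finset.univ.filter (fun p : Fin n × Fin n => p.1 = p.2)
      = Finset.univ.image (fun i : Fin n => (i, i)) := by
    ext p
    simp only [Finset.mem_filter, Finset.mem_univ, true_and, Finset.mem_image]
    constructor
    · intro h; exact ⟨p.1, Prod.ext rfl h⟩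
    · rintro ⟨i, hi⟩; rw [← hi]
  have hinj : Function.Injective (fun i : Fin n => (i, i)) := by
    intro a b hab
    exact (Prod.mk.injEq _ _ _ _ ▸ hab).1
  have hcard_diag : (Finset.univ.filter (fun p : Fin n × Fin n => p.1 = p.2)).card = n := by
    rw [himg, Finset.card_image_of_injective _ hinj]
    simp
  have hScard : s.card = n * n - n := by
    have h2 := Finset.card_filter_add_card_filter_not
      (s := (Finset.univ : Finset (Fin n × Fin n))) (p := fun p => p.1 = p.2)
    simp only [Finset.card_univ, Fintype.card_prod, Fintype.card_fin] at h2
    rw [hs]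
    omega
  -- split S into diagonal and off-diagonal
  have hSsplit : S = n + ∑ p ∈ s, Complex.normSq (G p.1 p.2) := by
    have h0 : S = ∑ p : Fin n × Fin n, Complex.normSq (G p.1 p.2) := by
      rw [hS, ← Finset.sum_product']
      rfl
    rw [h0, ← Finset.sum_filter_add_sum_filter_not Finset.univ
      (fun p : Fin n × Fin n => p.1 = p.2), ← hs]
    congr 1
    rw [himg, Finset.sum_image (fun a _ b _ hab => hinj hab)]
    rw [Finset.sum_congr rfl fun i (_ : i ∈ Finset.univ) => by
      rw [hunit i]]
    simp
  -- upper bound pieces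
  have hptwise : ∀ p ∈ s, Complex.normSq (G p.1 p.2) ≤ c := by
    intro p hp
    simp only [hs, Finset.mem_filter] at hp
    have hb : ‖G p.1 p.2‖ ≤ μ := hμ.2 ⟨p.1, p.2, hp.2, rfl⟩
    have h0 : Complex.normSq (G p.1 p.2) = (‖G p.1 p.2‖) ^ 2 :=
      (Complex.sq_norm _).symm
    rw [h0, ← hμsq]
    exact pow_le_pow_left₀ (norm_nonneg _) hb 2
  have harith : (n : ℝ) + ((n * n - n : ℕ) : ℝ) * c = N ^ 2 / M := by
    have hle : n ≤ n * n := Nat.le_mul_of_pos_left n (by omega)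
    have hcast : ((n * n - n : ℕ) : ℝ) = N * N - N := by
      rw [Nat.cast_sub hle, hN]; push_cast; ring
    rw [hcast, hc, ← hN]
    have hMne : M ≠ 0 := ne_of_gt hM0
    have hN1ne : N - 1 ≠ 0 := by intro h; nlinarith
    field_simp
    ring
  have hupper : S ≤ N ^ 2 / M := by
    rw [hSsplit, ← harith, ← hScard]
    have h1 : ∑ p ∈ s, Complex.normSq (G p.1 p.2) ≤ ∑ p ∈ s, c :=
      Finset.sum_le_sum hptwise
    simp only [Finset.sum_const, nsmul_eq_mul] at h1
    linarith
  -- lower bound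
  have hdiagT : ∑ i, (t i) ^ 2 ≤ S' := by
    rw [hS']
    apply Finset.sum_le_sum
    intro i _
    calc (t i) ^ 2 = Complex.normSq (T i i) := by
          rw [hTdiag i, Complex.normSq_ofReal]; ring
      _ ≤ ∑ j, Complex.normSq (T i j) :=
          Finset.single_le_sum (fun j _ => Complex.normSq_nonneg _) (Finset.mem_univ i)
  have hsq : ∑ i, (t i - N / M) ^ 2 = ∑ i, (t i) ^ 2 - N ^ 2 / M := by
    have hexp : ∀ i, (t i - N / M) ^ 2 = (t i) ^ 2 - 2 * (N / M) * t i + (N / M) ^ 2 := by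
      intro i; ring
    rw [Finset.sum_congr rfl fun i (_ : i ∈ Finset.univ) => hexp i]
    rw [Finset.sum_add_distrib, Finset.sum_sub_distrib, ← Finset.mul_sum, hsumt]
    simp only [Finset.sum_const, Finset.card_univ, Fintype.card_fin, nsmul_eq_mul]
    rw [hM]
    have hMne : (m : ℝ) ≠ 0 := by positivity
    field_simp
    ring
  have hlower : N ^ 2 / M ≤ ∑ i, (t i) ^ 2 := by
    have h0 : 0 ≤ ∑ i, (t i - N / M) ^ 2 :=
      Finset.sum_nonneg fun i _ => sq_nonneg _
    linarith [hsq]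
  -- the chain collapses
  have hchain1 : ∑ i, (t i) ^ 2 = N ^ 2 / M := by
    linarith [hdiagT, hupper, hlower, hSS']
  have hchain2 : S' = ∑ i, (t i) ^ 2 := by
    linarith [hdiagT, hupper, hlower, hchain1, hSS']
  have hchain3 : S = N ^ 2 / M := by
    rw [hSS', hchain2, hchain1]
  -- all t i equal n/m
  have hti : ∀ i, t i = N / M := by
    have h0 : ∑ i, (t i - N / M) ^ 2 = 0 := by rw [hsq]; linarith
    intro i
    have h1 := (Finset.sum_eq_zero_iff_of_nonneg
      (fun i _ => sq_nonneg (t i - N / M))).mp h0 i (Finset.mem_univ i)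
    have h2 : t i - N / M = 0 := by
      exact pow_eq_zero_iff (n := 2) (by norm_num) |>.mp h1
    linarith
  -- off-diagonal of T is zero
  have hToff : ∀ i j, i ≠ j → T i j = 0 := by
    have h0 : ∑ i, Complex.normSq (T i i) = ∑ i, (t i) ^ 2 := by
      refine Finset.sum_congr rfl fun i _ => ?_
      rw [hTdiag i, Complex.normSq_ofReal]; ring
    have h1 : ∑ i, (∑ j, Complex.normSq (T i j) - Complex.normSq (T i i)) = 0 := by
      rw [Finset.sum_sub_distrib, ← hS', h0]
      linarith [hchain2]
    have h2 : ∀ i, ∑ j, Complex.normSq (T i j) - Complex.normSq (T i i) = 0 := by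
      intro i
      refine (Finset.sum_eq_zero_iff_of_nonneg (fun i _ => ?_)).mp h1 i (Finset.mem_univ i)
      have h3 := Finset.single_le_sum
        (fun j (_ : j ∈ Finset.univ) => Complex.normSq_nonneg (T i j)) (Finset.mem_univ i)
      linarith
    intro i j hij
    have h3 : ∑ k ∈ Finset.univ.erase i, Complex.normSq (T i k) = 0 := by
      have h4 := h2 i
      have h5 : ∑ k, Complex.normSq (T i k)
          = Complex.normSq (T i i) + ∑ k ∈ Finset.univ.erase i, Complex.normSq (T i k) :=
        (Finset.add_sum_erase _ _ (Finset.mem_univ i)).symm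
      linarith
    have h6 := (Finset.sum_eq_zero_iff_of_nonneg
      (fun k _ => Complex.normSq_nonneg (T i k))).mp h3 j
      (Finset.mem_erase.mpr ⟨hij.symm, Finset.mem_univ j⟩)
    exact Complex.normSq_eq_zero.mp h6
  constructor
  · ext i j
    by_cases hij : i = j
    · subst hij
      rw [hTdiag i, hti i]
      simp only [Matrix.smul_apply, one_apply_eq, smul_eq_mul, mul_one]
      rw [hM, hN]
      push_cast
      ring
    · rw [hToff i j hij]
      simp [one_apply_ne hij]
  · -- off-diagonal moduli all equal
    have hsum_eq : ∑ p ∈ s, Complex.normSq (G p.1 p.2) = ∑ p ∈ s, c := by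
      simp only [Finset.sum_const, nsmul_eq_mul, hScard]
      have h0 := hSsplit
      rw [hchain3] at h0
      linarith [harith]
    have hall := (Finset.sum_eq_sum_iff_of_le hptwise).mp hsum_eq
    intro i j hij
    have hmem : (i, j) ∈ s := by simp [hs, hij]
    have hval : Complex.normSq (G i j) = c := hall (i, j) hmem
    rw [Complex.norm_def, hval, hc]
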